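/- Surrogate-index identification: if (i) Y(w) ⟂ W | X, S(w), G=o (latent unconfoundedness through the surrogate) and (ii) consistency holds, then E[Y(w) | X, G=o] = E[ E[Y | W=w, X, S, G=o] | evaluated at S ∼ law of S(w) given X ], i.e., the mean long-term potential outcome is obtained by integrating the regression E[Y | W=w, X, S=s, G=o] against the conditional distribution of S(w) given X. -/

import Mathlib

open MeasureTheory
open scoped ENNReal NNReal

/-- Conditional expectation of `f` given the event `A`. -/
noncomputable def cexp {Ω : Type*} [MeasurableSpace Ω] (μ : Measure Ω)
    (f : Ω → ℝ) (A : Set Ω) : ℝ :=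
  (∫ ω in A, f ω ∂μ) / (μ A).toReal

/-- Tower-type lemma: integrating the conditional expectation of `f` given the fibers of a
countably-valued measurable map `T` recovers the integral of `f`. -/
lemma cexp_tower {Ω 𝒮 : Type*} [MeasurableSpace Ω] [MeasurableSpace 𝒮]
    [Countable 𝒮] [MeasurableSingletonClass 𝒮]
    (ν : Measure Ω) [IsFiniteMeasure ν] (f : Ω → ℝ) (hf : Integrable f ν)
    (T : Ω → 𝒮) (hT : Measurable T) :
    ∫ ω, cexp ν f (T ⁻¹' {T ω}) ∂ν = ∫ ω, f ω ∂ν := by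
  classical
  set c : 𝒮 → ℝ := fun s => cexp ν f (T ⁻¹' {s}) with hc
  have htm : ∀ s : 𝒮, MeasurableSet (T ⁻¹' {s}) := fun s => hT (measurableSet_singleton s)
  have htd : Pairwise (Function.onFun Disjoint fun s : 𝒮 => T ⁻¹' {s}) := by
    intro a b hab
    refine Set.disjoint_left.mpr fun ω ha hb => hab ?_
    simp only [Set.mem_preimage, Set.mem_singleton_iff] at ha hb
    rw [← ha, ← hb]
  have htU : (⋃ s : 𝒮, T ⁻¹' {s}) = Set.univ := by
    ext ω; simp
  have hcs : ∀ s : 𝒮, c s = (∫ ω in T ⁻¹' {s}, f ω ∂ν) / (ν (T ⁻¹' {s})).toReal :=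
    fun s => rfl
  have hconst : ∀ s : 𝒮, ∀ ω ∈ T ⁻¹' {s}, c (T ω) = c s := by
    intro s ω hω
    simp only [Set.mem_preimage, Set.mem_singleton_iff] at hω
    rw [hω]
  have hbound : ∀ s : 𝒮, (‖c s‖₊ : ℝ≥0∞) * ν (T ⁻¹' {s}) ≤ ∫⁻ ω in T ⁻¹' {s}, ‖f ω‖₊ ∂ν := by
    intro s
    rcases eq_or_ne (ν (T ⁻¹' {s})) 0 with h0 | h0
    · rw [h0, mul_zero]; exact zero_le
    · have hne : ν (T ⁻¹' {s}) ≠ ⊤ := measure_ne_top ν _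
      have hm : 0 < (ν (T ⁻¹' {s})).toReal := ENNReal.toReal_pos h0 hne
      have h1 : ‖c s‖ * (ν (T ⁻¹' {s})).toReal ≤ ∫ ω in T ⁻¹' {s}, ‖f ω‖ ∂ν := by
        have h2 : ‖c s‖ * (ν (T ⁻¹' {s})).toReal = ‖∫ ω in T ⁻¹' {s}, f ω ∂ν‖ := by
          rw [hcs s, norm_div, Real.norm_eq_abs ((ν (T ⁻¹' {s})).toReal), abs_of_pos hm,
            div_mul_cancel₀ _ hm.ne']
        rw [h2]
        exact norm_integral_le_integral_norm _
      calc (‖c s‖₊ : ℝ≥0∞) * ν (T ⁻¹' {s})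
          = ENNReal.ofReal (‖c s‖ * (ν (T ⁻¹' {s})).toReal) := by
            rw [ENNReal.ofReal_mul (norm_nonneg _), ENNReal.ofReal_toReal hne,
              ofReal_norm, enorm_eq_nnnorm]
        _ ≤ ENNReal.ofReal (∫ ω in T ⁻¹' {s}, ‖f ω‖ ∂ν) := ENNReal.ofReal_le_ofReal h1
        _ = ∫⁻ ω in T ⁻¹' {s}, ‖f ω‖₊ ∂ν :=
            ofReal_integral_norm_eq_lintegral_enorm hf.restrict
  have hint : Integrable (fun ω => c (T ω)) ν := by
    refine ⟨((measurable_of_countable c).comp hT).aestronglyMeasurable, ?_⟩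
    have hlt : (∫⁻ ω, (‖c (T ω)‖₊ : ℝ≥0∞) ∂ν) < ⊤ := by
      calc ∫⁻ ω, (‖c (T ω)‖₊ : ℝ≥0∞) ∂ν
          = ∑' s : 𝒮, ∫⁻ ω in T ⁻¹' {s}, (‖c (T ω)‖₊ : ℝ≥0∞) ∂ν := by
            rw [← setLIntegral_univ, ← htU, lintegral_iUnion htm htd]
        _ = ∑' s : 𝒮, (‖c s‖₊ : ℝ≥0∞) * ν (T ⁻¹' {s}) := by
            refine tsum_congr fun s => ?_
            rw [setLIntegral_congr_fun (htm s)
              (fun ω hω => by rw [hconst s ω hω]),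
              setLIntegral_const]
        _ ≤ ∑' s : 𝒮, ∫⁻ ω in T ⁻¹' {s}, ‖f ω‖₊ ∂ν := ENNReal.tsum_le_tsum hbound
        _ = ∫⁻ ω, ‖f ω‖₊ ∂ν := by rw [← lintegral_iUnion htm htd, htU, setLIntegral_univ]
        _ < ⊤ := hf.2
    exact hlt
  calc ∫ ω, c (T ω) ∂ν
      = ∑' s : 𝒮, ∫ ω in T ⁻¹' {s}, c (T ω) ∂ν := by
        rw [← setIntegral_univ, ← htU]
        exact integral_iUnion htm htd hint.integrableOn
    _ = ∑' s : 𝒮, ∫ ω in T ⁻¹' {s}, f ω ∂ν := by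
        refine tsum_congr fun s => ?_
        rw [setIntegral_congr_fun (htm s) (hconst s), setIntegral_const, smul_eq_mul]
        rcases eq_or_ne (ν (T ⁻¹' {s})) 0 with h0 | h0
        · rw [Measure.real, h0, ENNReal.toReal_zero, zero_mul, Measure.restrict_eq_zero.mpr h0,
            integral_zero_measure]
        · have hm0 : (ν (T ⁻¹' {s})).toReal ≠ 0 :=
            ENNReal.toReal_ne_zero.mpr ⟨h0, measure_ne_top ν _⟩
          rw [hcs s, mul_comm, Measure.real, div_mul_cancel₀ _ hm0]
    _ = ∫ ω, f ω ∂ν := by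
        rw [← integral_iUnion htm htd hf.integrableOn, htU, setIntegral_univ]

/-- Surrogate-index identification (`G = true` encodes `o`). If
(i) `Y(w) ⟂ W | X, S(w), G=o` (latent unconfoundedness through the surrogate, here in
mean form) and (ii) consistency holds, then the mean long-term potential outcome is
obtained by integrating the regression `E[Y | W=w, X=x, S=s, G=o]` against the
conditional distribution of `S(w)` given `X = x` (in the observational group):
`E[Y(w) | X=x, G=o] = E[ E[Y | W=w, X=x, S = S(w), G=o] | X=x, G=o ]`. -/
theorem surrogate_index_identification
    {Ω 𝒳 𝒮 : Type*} [MeasurableSpace Ω] [MeasurableSpace 𝒳] [MeasurableSpace 𝒮]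
    [Countable 𝒮] [MeasurableSingletonClass 𝒮]
    (μ : Measure Ω) [IsProbabilityMeasure μ]
    (W Y Y0 Y1 : Ω → ℝ) (S S0 S1 : Ω → 𝒮) (X : Ω → 𝒳) (G : Ω → Bool) (x : 𝒳)
    (w : ℝ) (hw : w = 0 ∨ w = 1)
    (Yw : Ω → ℝ) (hYw : Yw = if w = 1 then Y1 else Y0)
    (Sw : Ω → 𝒮) (hSw : Sw = if w = 1 then S1 else S0)
    (hWm : Measurable W) (hY0m : Measurable Y0) (hY1m : Measurable Y1)
    (hS0m : Measurable S0) (hS1m : Measurable S1)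
    (hXm : Measurable X) (hGm : Measurable G)
    (hY0i : Integrable Y0 μ) (hY1i : Integrable Y1 μ)
    -- binary treatment
    (hWbin : ∀ ω, W ω = 0 ∨ W ω = 1)
    -- (ii) consistency: Y = Y(W), S = S(W)
    (hconsY : ∀ ω, (W ω = 1 → Y ω = Y1 ω) ∧ (W ω = 0 → Y ω = Y0 ω))
    (hconsS : ∀ ω, (W ω = 1 → S ω = S1 ω) ∧ (W ω = 0 → S ω = S0 ω))
    -- positivity
    (hposXG : 0 < μ {ω | X ω = x ∧ G ω = true})
    (hposW : ∀ s : 𝒮, 0 < μ {ω | X ω = x ∧ Sw ω = s ∧ G ω = true} →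
      0 < μ {ω | W ω = w ∧ X ω = x ∧ Sw ω = s ∧ G ω = true})
    -- (i) latent unconfoundedness: Y(w) ⟂ W | X, S(w), G=o (mean form)
    (hLU : ∀ s : 𝒮,
      cexp μ Yw {ω | W ω = w ∧ X ω = x ∧ Sw ω = s ∧ G ω = true}
        = cexp μ Yw {ω | X ω = x ∧ Sw ω = s ∧ G ω = true}) :
    cexp μ Yw {ω | X ω = x ∧ G ω = true}
      = cexp μ (fun ω =>
          cexp μ Y {ω' | W ω' = w ∧ X ω' = x ∧ S ω' = Sw ω ∧ G ω' = true})
        {ω | X ω = x ∧ G ω = true} := by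
  classical
  have hYwi : Integrable Yw μ := by rw [hYw]; split_ifs; exacts [hY1i, hY0i]
  have hSwm : Measurable Sw := by rw [hSw]; split_ifs; exacts [hS1m, hS0m]
  have hWY : ∀ ω, W ω = w → Y ω = Yw ω := by
    intro ω hWω
    rcases hw with h0 | h1
    · rw [hYw, if_neg (by rw [h0]; norm_num)]
      exact (hconsY ω).2 (h0 ▸ hWω)
    · rw [hYw, if_pos h1]
      exact (hconsY ω).1 (h1 ▸ hWω)
  have hWS : ∀ ω, W ω = w → S ω = Sw ω := by
    intro ω hWω
    rcases hw with h0 | h1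
    · rw [hSw, if_neg (by rw [h0]; norm_num)]
      exact (hconsS ω).2 (h0 ▸ hWω)
    · rw [hSw, if_pos h1]
      exact (hconsS ω).1 (h1 ▸ hWω)
  have hWset : MeasurableSet {ω | W ω = w} := hWm (measurableSet_singleton w)
  have hset : ∀ s : 𝒮, {ω' | W ω' = w ∧ X ω' = x ∧ S ω' = s ∧ G ω' = true}
      = {ω' | W ω' = w ∧ X ω' = x ∧ Sw ω' = s ∧ G ω' = true} := by
    intro s
    ext ω
    simp only [Set.mem_setOf_eq]
    constructor
    · rintro ⟨h1, h2, h3, h4⟩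
      exact ⟨h1, h2, by rw [← hWS ω h1]; exact h3, h4⟩
    · rintro ⟨h1, h2, h3, h4⟩
      exact ⟨h1, h2, by rw [hWS ω h1]; exact h3, h4⟩
  have hYint : ∀ s : 𝒮, ∫ ω in {ω' | W ω' = w ∧ X ω' = x ∧ S ω' = s ∧ G ω' = true}, Y ω ∂μ
      = ∫ ω in {ω' | W ω' = w ∧ X ω' = x ∧ Sw ω' = s ∧ G ω' = true}, Yw ω ∂μ := by
    intro s
    rw [hset s]
    have hBC : {ω' | W ω' = w ∧ X ω' = x ∧ Sw ω' = s ∧ G ω' = true}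
        = {ω' | W ω' = w} ∩ {ω' | X ω' = x ∧ Sw ω' = s ∧ G ω' = true} := by
      ext ω
      simp only [Set.mem_setOf_eq, Set.mem_inter_iff]
    rw [hBC, ← Measure.restrict_restrict hWset]
    exact setIntegral_congr_fun hWset fun ω hω => hWY ω hω
  have hres : ∀ s : 𝒮, (μ.restrict {ω | X ω = x ∧ G ω = true}).restrict (Sw ⁻¹' {s})
      = μ.restrict {ω' | X ω' = x ∧ Sw ω' = s ∧ G ω' = true} := by
    intro s
    rw [Measure.restrict_restrict (hSwm (measurableSet_singleton s))]
    congr 1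
    ext ω
    simp only [Set.mem_inter_iff, Set.mem_preimage, Set.mem_singleton_iff, Set.mem_setOf_eq]
    tauto
  have hνt : ∀ s : 𝒮, μ.restrict {ω | X ω = x ∧ G ω = true} (Sw ⁻¹' {s})
      = μ {ω' | X ω' = x ∧ Sw ω' = s ∧ G ω' = true} := by
    intro s
    rw [Measure.restrict_apply (hSwm (measurableSet_singleton s))]
    congr 1
    ext ω
    simp only [Set.mem_inter_iff, Set.mem_preimage, Set.mem_singleton_iff, Set.mem_setOf_eq]
    tauto
  have hpoint : ∀ ω, cexp μ Y {ω' | W ω' = w ∧ X ω' = x ∧ S ω' = Sw ω ∧ G ω' = true}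
      = cexp (μ.restrict {ω | X ω = x ∧ G ω = true}) Yw (Sw ⁻¹' {Sw ω}) := by
    intro ω
    have h1 : cexp μ Y {ω' | W ω' = w ∧ X ω' = x ∧ S ω' = Sw ω ∧ G ω' = true}
        = cexp μ Yw {ω' | X ω' = x ∧ Sw ω' = Sw ω ∧ G ω' = true} := by
      rw [← hLU (Sw ω)]
      unfold cexp
      rw [hYint (Sw ω), hset (Sw ω)]
    rw [h1]
    unfold cexp
    rw [hres (Sw ω), hνt (Sw ω)]
  have hYwiν : Integrable Yw (μ.restrict {ω | X ω = x ∧ G ω = true}) := hYwi.restrict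
  have htower := cexp_tower (μ.restrict {ω | X ω = x ∧ G ω = true}) Yw hYwiν Sw hSwm
  have hFeq : (fun ω => cexp μ Y {ω' | W ω' = w ∧ X ω' = x ∧ S ω' = Sw ω ∧ G ω' = true})
      = fun ω => cexp (μ.restrict {ω | X ω = x ∧ G ω = true}) Yw (Sw ⁻¹' {Sw ω}) :=
    funext hpoint
  rw [hFeq]
  unfold cexp
  congr 1
  exact htower.symm
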